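/- Let H be a connected m-joined graph in which for every vertex v there are at least m vertices within distance ℓ of v, where ℓ = ⌈log m / log(1+t)⌉ for some t ≥ 1. Then diam(H) ≤ 2ℓ + 1. -/
import Mathlib


open Classical in
theorem stmt7 {V : Type*} [Fintype V] (H : SimpleGraph V) (m : ℕ) (t : ℝ) (ht : 1 ≤ t)
    (hconn : H.Connected)
    (hJ : ∀ S T : Finset V, Disjoint S T → S.card = m → T.card = m →
      ∃ a ∈ S, ∃ b ∈ T, H.Adj a b)
    (ℓ : ℕ) (hℓ : ℓ = ⌈Real.log m / Real.log (1 + t)⌉₊)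
    (hball : ∀ v : V, m ≤ (Finset.univ.filter (fun u => H.dist v u ≤ ℓ)).card) :
    ∀ u v : V, H.dist u v ≤ 2 * ℓ + 1 := by
  intro u v
  set Bu := Finset.univ.filter (fun w => H.dist u w ≤ ℓ) with hBu
  set Bv := Finset.univ.filter (fun w => H.dist v w ≤ ℓ) with hBv
  by_cases hdisj : Disjoint Bu Bv
  · obtain ⟨S, hSsub, hScard⟩ := Finset.exists_subset_card_eq (hball u)
    obtain ⟨T, hTsub, hTcard⟩ := Finset.exists_subset_card_eq (hball v)
    obtain ⟨a, ha, b, hb, hab⟩ := hJ S T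
      (hdisj.mono hSsub hTsub) hScard hTcard
    have hua : H.dist u a ≤ ℓ := (Finset.mem_filter.mp (hSsub ha)).2
    have hvb : H.dist v b ≤ ℓ := (Finset.mem_filter.mp (hTsub hb)).2
    have hab1 : H.dist a b ≤ 1 := by
      exact le_of_eq (SimpleGraph.dist_eq_one_iff_adj.mpr hab)
    calc H.dist u v ≤ H.dist u a + H.dist a v := hconn.dist_triangle
      _ ≤ H.dist u a + (H.dist a b + H.dist b v) :=
          Nat.add_le_add_left hconn.dist_triangle _
      _ ≤ ℓ + (1 + ℓ) := by
          have hbv : H.dist b v ≤ ℓ := by rwa [SimpleGraph.dist_comm]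
          omega
      _ = 2 * ℓ + 1 := by ring
  · rw [Finset.not_disjoint_iff] at hdisj
    obtain ⟨w, hw1, hw2⟩ := hdisj
    have h1 : H.dist u w ≤ ℓ := (Finset.mem_filter.mp hw1).2
    have h2 : H.dist v w ≤ ℓ := (Finset.mem_filter.mp hw2).2
    calc H.dist u v ≤ H.dist u w + H.dist w v := hconn.dist_triangle
      _ ≤ 2 * ℓ + 1 := by rw [SimpleGraph.dist_comm (u := w) (v := v)]; omega
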